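/- Let G be a finite undirected chordal graph on n vertices whose largest clique has size ω, and let 𝒞 be the set of maximal cliques of G. Then n − |𝒞| ≥ ω − 1. -/

import Mathlib

/-- A graph is chordal iff it has no induced cycle of length at least 4
(equivalently, every cycle of length at least 4 has a chord). -/
def Chordal {V : Type*} (G : SimpleGraph V) : Prop :=
  ∀ n : ℕ, 4 ≤ n → IsEmpty (SimpleGraph.cycleGraph n ↪g G)

open SimpleGraph

attribute [local instance] Classical.propDecidable

namespace ChordalAux
universe u
variable {V : Type u} {G : SimpleGraph V} {u v x y : V}

def Simp (G : SimpleGraph V) (v : V) : Prop :=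
  ∀ u w, G.Adj v u → G.Adj v w → u ≠ w → G.Adj u w

lemma getVert_mem_support (p : G.Walk u v) (i : ℕ) : p.getVert i ∈ p.support := by
  induction p generalizing i with
  | nil => cases i <;> simp [SimpleGraph.Walk.getVert]
  | cons h q ih =>
    cases i with
    | zero => simp [SimpleGraph.Walk.getVert]
    | succ n => simp only [SimpleGraph.Walk.getVert_cons_succ, SimpleGraph.Walk.support_cons,
        List.mem_cons]; exact Or.inr (ih n)

lemma getVert_inj {p : G.Walk u v} (hp : p.IsPath) {i j : ℕ} (hi : i ≤ p.length)
    (hj : j ≤ p.length) (h : p.getVert i = p.getVert j) : i = j := by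
  induction p generalizing i j with
  | nil => simp at hi hj; omega
  | cons hadj q ih =>
    rw [SimpleGraph.Walk.cons_isPath_iff] at hp
    cases i with
    | zero =>
      cases j with
      | zero => rfl
      | succ m =>
        exfalso
        rw [SimpleGraph.Walk.getVert_zero, SimpleGraph.Walk.getVert_cons_succ] at h
        exact hp.2 (h ▸ getVert_mem_support q m)
    | succ n =>
      cases j with
      | zero =>
        exfalso
        rw [SimpleGraph.Walk.getVert_zero, SimpleGraph.Walk.getVert_cons_succ] at h
        exact hp.2 (h ▸ getVert_mem_support q n)
      | succ m =>
        simp only [SimpleGraph.Walk.getVert_cons_succ] at h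
        simp only [SimpleGraph.Walk.length_cons] at hi hj
        exact congrArg Nat.succ (ih hp.1 (by omega) (by omega) h)

lemma length_drop (p : G.Walk u v) (n : ℕ) : (p.drop n).length = p.length - n := by
  induction p generalizing n with
  | nil => simp [SimpleGraph.Walk.drop, SimpleGraph.Walk.getVert]
  | cons h q ih =>
    cases n with
    | zero => simp [SimpleGraph.Walk.drop]
    | succ m => simpa [SimpleGraph.Walk.drop] using ih m

lemma support_drop_subset (p : G.Walk u v) (n : ℕ) :
    ∀ z ∈ (p.drop n).support, z ∈ p.support := by
  induction p generalizing n with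
  | nil => simp [SimpleGraph.Walk.drop, SimpleGraph.Walk.getVert]
  | cons h q ih =>
    cases n with
    | zero => simp [SimpleGraph.Walk.drop]
    | succ m =>
      intro z hz
      simp only [SimpleGraph.Walk.drop, SimpleGraph.Walk.support_copy] at hz
      simp only [SimpleGraph.Walk.support_cons, List.mem_cons]
      exact Or.inr (ih m z hz)


/-- prefix walk of length `i` -/
noncomputable def wtake (p : G.Walk x y) (i : ℕ) (hi : i ≤ p.length) : G.Walk x (p.getVert i) :=
  ((p.reverse.drop (p.length - i)).copy (by
      rw [SimpleGraph.Walk.getVert_reverse]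
      congr 1
      omega) rfl).reverse

lemma length_wtake (p : G.Walk x y) (i : ℕ) (hi : i ≤ p.length) :
    (wtake p i hi).length = i := by
  simp [wtake, length_drop]
  omega

lemma support_wtake_subset (p : G.Walk x y) (i : ℕ) (hi : i ≤ p.length) :
    ∀ z ∈ (wtake p i hi).support, z ∈ p.support := by
  intro z hz
  simp only [wtake, SimpleGraph.Walk.support_reverse, List.mem_reverse,
    SimpleGraph.Walk.support_copy] at hz
  have := support_drop_subset p.reverse (p.length - i) z hz
  rwa [SimpleGraph.Walk.support_reverse, List.mem_reverse] at this

/-- There is an induced (chordless) path within any "walkable" set. -/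
lemma exists_induced_walk (s : Set V) (x y : V)
    (h : ∃ p : G.Walk x y, ∀ z ∈ p.support, z ∈ s) :
    ∃ p : G.Walk x y, (∀ z ∈ p.support, z ∈ s) ∧ p.IsPath ∧
      (∀ i j, i + 2 ≤ j → j ≤ p.length → ¬ G.Adj (p.getVert i) (p.getVert j)) := by
  classical
  set T : Set ℕ := {k | ∃ p : G.Walk x y, (∀ z ∈ p.support, z ∈ s) ∧ p.length = k} with hT
  have hne : T.Nonempty := by
    obtain ⟨p, hp⟩ := h
    exact ⟨p.length, p, hp, rfl⟩
  obtain ⟨p₀, hp₀s, hp₀l⟩ : ∃ p : G.Walk x y, (∀ z ∈ p.support, z ∈ s) ∧ p.length = sInf T :=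
    Nat.sInf_mem hne
  have hmin : ∀ q : G.Walk x y, (∀ z ∈ q.support, z ∈ s) → p₀.length ≤ q.length := by
    intro q hq
    rw [hp₀l]
    exact Nat.sInf_le ⟨q, hq, rfl⟩
  -- replace by bypass
  refine ⟨p₀.bypass, fun z hz => hp₀s z (SimpleGraph.Walk.support_bypass_subset _ hz),
    SimpleGraph.Walk.bypass_isPath _, ?_⟩
  have hsupb : ∀ z ∈ p₀.bypass.support, z ∈ s :=
    fun z hz => hp₀s z (SimpleGraph.Walk.support_bypass_subset _ hz)
  have hlb : p₀.bypass.length = p₀.length :=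
    le_antisymm (SimpleGraph.Walk.length_bypass_le _) (hmin _ hsupb)
  set p := p₀.bypass with hpdef
  intro i j hij hj hadj
  have hi : i ≤ p.length := by omega
  -- shortcut walk
  let r : G.Walk x y := (wtake p i hi).append (SimpleGraph.Walk.cons hadj (p.drop j))
  have hrs : ∀ z ∈ r.support, z ∈ s := by
    intro z hz
    rw [SimpleGraph.Walk.mem_support_append_iff] at hz
    rcases hz with hz | hz
    · exact hsupb z (support_wtake_subset p i hi z hz)
    · rw [SimpleGraph.Walk.support_cons, List.mem_cons] at hz
      rcases hz with rfl | hz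
      · exact hsupb _ (getVert_mem_support p i)
      · exact hsupb z (support_drop_subset p j z hz)
  have hrl : r.length = i + 1 + (p.length - j) := by
    simp [r, SimpleGraph.Walk.length_append, length_wtake, length_drop]
    omega
  have := hmin r hrs
  omega


lemma cycle_embed {m : ℕ} (f : Fin (m + 2) → V) (hinj : Function.Injective f)
    (hadj : ∀ i : Fin (m + 2), G.Adj (f i) (f (i + 1)))
    (hchord : ∀ i j : Fin (m + 2), G.Adj (f i) (f j) → j = i + 1 ∨ i = j + 1) :
    Nonempty (SimpleGraph.cycleGraph (m + 2) ↪g G) := by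
  refine ⟨⟨⟨f, hinj⟩, ?_⟩⟩
  intro u v
  simp only [Function.Embedding.coeFn_mk, SimpleGraph.cycleGraph_adj]
  constructor
  · intro h
    rcases hchord u v h with h1 | h1
    · exact Or.inr (by rw [h1, add_sub_cancel_left])
    · exact Or.inl (by rw [h1, add_sub_cancel_left])
  · intro h
    rcases h with h | h
    · have h2 : u = v + 1 := by rw [sub_eq_iff_eq_add] at h; exact h.trans (add_comm 1 v)
      rw [h2]
      exact (hadj v).symm
    · have h2 : v = u + 1 := by rw [sub_eq_iff_eq_add] at h; exact h.trans (add_comm 1 u)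
      rw [h2]
      exact hadj u

/-- two vertex-disjoint induced paths between nonadjacent x,y yield an induced cycle. -/
lemma parts_false (hch : Chordal G) {x y : V} (hxy : x ≠ y) (hnadj : ¬ G.Adj x y)
    {A B : Set V} (hyA : y ∉ A) (hxB : x ∉ B)
    (hABne : ∀ u ∈ A, ∀ w ∈ B, u ≠ w) (hABadj : ∀ u ∈ A, ∀ w ∈ B, ¬ G.Adj u w)
    (p : G.Walk x y) (hp : p.IsPath) (hpsup : ∀ z ∈ p.support, z = x ∨ z = y ∨ z ∈ A)
    (hpc : ∀ i j, i + 2 ≤ j → j ≤ p.length → ¬ G.Adj (p.getVert i) (p.getVert j))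
    (q : G.Walk y x) (hq : q.IsPath) (hqsup : ∀ z ∈ q.support, z = x ∨ z = y ∨ z ∈ B)
    (hqc : ∀ i j, i + 2 ≤ j → j ≤ q.length → ¬ G.Adj (q.getVert i) (q.getVert j)) : False := by
  set m := p.length with hm
  set k := q.length with hk
  have hpy : p.getVert m = y := p.getVert_length
  have hqx : q.getVert k = x := q.getVert_length
  have hm2 : 2 ≤ m := by
    have hm0 : m ≠ 0 := by
      intro h0
      exact hxy (p.getVert_zero.symm.trans ((congrArg p.getVert h0.symm).trans hpy))
    have hm1 : m ≠ 1 := by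
      intro h1
      have hy1 : p.getVert 1 = y := (congrArg p.getVert h1.symm).trans hpy
      have := p.adj_getVert_succ (show 0 < p.length by omega)
      rw [p.getVert_zero, zero_add, hy1] at this
      exact hnadj this
    omega
  have hk2 : 2 ≤ k := by
    have hk0 : k ≠ 0 := by
      intro h0
      exact hxy (hqx.symm.trans ((congrArg q.getVert h0).trans q.getVert_zero))
    have hk1 : k ≠ 1 := by
      intro h1
      have hy1 : q.getVert 1 = x := (congrArg q.getVert h1.symm).trans hqx
      have := q.adj_getVert_succ (show 0 < q.length by omega)
      rw [q.getVert_zero, zero_add, hy1] at this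
      exact hnadj this.symm
    omega
  set n := m + k with hn
  have hn4 : 4 ≤ n := by omega
  -- vertex classification
  have hpA : ∀ i, 0 < i → i < m → p.getVert i ∈ A := by
    intro i h0 hlt
    rcases hpsup _ (getVert_mem_support p i) with h | h | h
    · exact absurd (getVert_inj hp (by omega) (by omega)
        (h.trans p.getVert_zero.symm)) (by omega)
    · exact absurd (getVert_inj hp (by omega) (le_refl _) (h.trans hpy.symm)) (by omega)
    · exact h
  have hqB : ∀ i, 0 < i → i < k → q.getVert i ∈ B := by
    intro i h0 hlt
    rcases hqsup _ (getVert_mem_support q i) with h | h | h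
    · exact absurd (getVert_inj hq (by omega) (le_refl _) (h.trans hqx.symm)) (by omega)
    · exact absurd (getVert_inj hq (by omega) (by omega)
        (h.trans q.getVert_zero.symm)) (by omega)
    · exact h
  set g : ℕ → V := fun i => if i < m then p.getVert i else q.getVert (i - m) with hg
  have hg0 : g 0 = x := by
    simp only [hg]
    rw [if_pos (show (0:ℕ) < m by omega)]
    exact p.getVert_zero
  have hgm : g m = y := by
    simp only [hg]
    rw [if_neg (lt_irrefl m), Nat.sub_self]
    exact q.getVert_zero
  have hgp : ∀ i, i < m → g i = p.getVert i := fun i h => by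
    simp only [hg]; rw [if_pos h]
  have hgq : ∀ i, m ≤ i → g i = q.getVert (i - m) := fun i h => by
    simp only [hg]; rw [if_neg (Nat.not_lt.mpr h)]
  have hgA : ∀ i, 0 < i → i < m → g i ∈ A := fun i h0 h1 => (hgp i h1) ▸ hpA i h0 h1
  have hgB : ∀ i, m < i → i < n → g i ∈ B := fun i h0 h1 => by
    rw [hgq i (by omega)]; exact hqB _ (by omega) (by omega)
  -- injectivity on [0, n)
  have ginj : ∀ i j, i < n → j < n → g i = g j → i = j := by
    have base : ∀ i j, i < j → j < n → g i = g j → False := by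
      intro i j hij hjn hgij
      rcases Nat.lt_or_ge j m with hjm | hjm
      · -- both in p part
        rw [hgp i (by omega), hgp j (by omega)] at hgij
        exact absurd (getVert_inj hp (by omega) (by omega) hgij) (by omega)
      · rcases Nat.lt_or_ge i m with him | him
        · -- i in p part, j in q part
          rcases Nat.eq_or_lt_of_le hjm with rfl | hjm'
          · -- j = m, g j = y
            rcases Nat.eq_zero_or_pos i with rfl | hi0
            · rw [hg0, hgm] at hgij; exact hxy hgij
            · refine hyA ?_
              rw [← hgm, ← hgij]
              exact hgA i hi0 him
          · -- j > m : g j ∈ B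
            rcases Nat.eq_zero_or_pos i with rfl | hi0
            · refine hxB ?_
              rw [← hg0, hgij]
              exact hgB j hjm' hjn
            · exact hABne _ (hgA i hi0 him) _ (hgB j hjm' hjn) hgij
        · -- both in q part
          rw [hgq i him, hgq j hjm] at hgij
          exact absurd (getVert_inj hq (by omega) (by omega) hgij) (by omega)
    intro i j hi hj hgij
    rcases Nat.lt_trichotomy i j with h | h | h
    · exact absurd hgij (fun hh => base i j h hj hh)
    · exact h
    · exact absurd hgij.symm (fun hh => base j i h hi hh)
  -- cyclic adjacency
  have gadj : ∀ i, i < n → G.Adj (g i) (g ((i + 1) % n)) := by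
    intro i hi
    rcases Nat.lt_or_ge (i + 1) n with hin | hin
    · rw [Nat.mod_eq_of_lt hin]
      rcases Nat.lt_or_ge (i + 1) m with him | him
      · rw [hgp i (by omega), hgp (i+1) him]
        exact p.adj_getVert_succ (by omega)
      · rcases Nat.eq_or_lt_of_le him with heq | hlt
        · -- i + 1 = m
          have h1 := p.adj_getVert_succ (show i < p.length by omega)
          have h2 : p.getVert (i + 1) = y := (congrArg p.getVert heq).symm.trans hpy
          rw [hgp i (by omega), ← heq, hgm]
          rwa [h2] at h1
        · rw [hgq i (by omega), hgq (i+1) (by omega)]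
          have : i + 1 - m = (i - m) + 1 := by omega
          rw [this]
          exact q.adj_getVert_succ (by omega)
    · -- i = n - 1, wraps to 0
      have hieq : i + 1 = n := by omega
      have : (i + 1) % n = 0 := by rw [hieq, Nat.mod_self]
      rw [this, hg0, ← hqx, hgq i (by omega)]
      have h2 : i - m = k - 1 := by omega
      rw [h2]
      have := q.adj_getVert_succ (show k - 1 < q.length by omega)
      rwa [show k - 1 + 1 = k by omega] at this
  -- chords
  have gchord : ∀ i j, i < j → j < n → G.Adj (g i) (g j) →
      j = i + 1 ∨ (i = 0 ∧ j = n - 1) := by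
    intro i j hij hjn hadj
    rcases Nat.lt_or_ge j m with hjm | hjm
    · -- both p part
      rw [hgp i (by omega), hgp j (by omega)] at hadj
      left
      by_contra hne
      exact hpc i j (by omega) (by omega) hadj
    · rcases Nat.eq_or_lt_of_le hjm with rfl | hjm'
      · -- j = m
        rw [hgp i (by omega), hgm] at hadj
        left
        by_contra hne
        have hadj' : G.Adj (p.getVert i) (p.getVert m) := by rw [hpy]; exact hadj
        exact hpc i m (by omega) (le_refl _) hadj'
      · -- j > m
        rcases Nat.lt_or_ge i m with him | him
        · rcases Nat.eq_zero_or_pos i with rfl | hi0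
          · -- i = 0 : x vs q part
            rw [hg0, hgq j (by omega)] at hadj
            right
            refine ⟨rfl, ?_⟩
            by_contra hne
            have hadj' : G.Adj (q.getVert (j - m)) (q.getVert k) := by
              rw [hqx]; exact hadj.symm
            exact hqc (j - m) k (by omega) (le_refl _) hadj'
          · exact absurd hadj (hABadj _ (hgA i hi0 him) _ (hgB j hjm' hjn))
        · -- both q part (i = m gives q index 0)
          rw [hgq i him, hgq j (by omega)] at hadj
          left
          by_contra hne
          exact hqc (i - m) (j - m) (by omega) (by omega) hadj
  -- build embedding
  obtain ⟨t, ht⟩ : ∃ t, n = t + 2 := ⟨n - 2, by omega⟩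
  set f : Fin (t + 2) → V := fun i => g i.val with hf
  have hval : ∀ i : Fin (t + 2), (i + 1).val = (i.val + 1) % n := by
    intro i
    rw [Fin.val_add, Fin.val_one, ht]
  have hinj : Function.Injective f := by
    intro i j h
    have h1 := i.isLt
    have h2 := j.isLt
    exact Fin.ext (ginj i.val j.val (by omega) (by omega) h)
  have hadjf : ∀ i : Fin (t + 2), G.Adj (f i) (f (i + 1)) := by
    intro i
    have h1 := i.isLt
    have := gadj i.val (by omega)
    rwa [← hval i] at this
  have hchordf : ∀ i j : Fin (t + 2), G.Adj (f i) (f j) → j = i + 1 ∨ i = j + 1 := by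
    intro i j hadj
    have hi := i.isLt
    have hj := j.isLt
    have hij : i.val ≠ j.val := fun h => (hadj.ne) (by simp only [hf]; rw [h])
    have conv : ∀ a b : Fin (t + 2), a.val < b.val → G.Adj (g a.val) (g b.val) →
        b = a + 1 ∨ a = b + 1 := by
      intro a b hab hadj'
      have hb := b.isLt
      rcases gchord a.val b.val hab (by omega) hadj' with h | ⟨h0, h1⟩
      · left
        apply Fin.ext
        rw [hval a, ← h, Nat.mod_eq_of_lt (by omega)]
      · right
        apply Fin.ext
        rw [hval b, h1, h0, show n - 1 + 1 = n by omega, ht, Nat.mod_self]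
    rcases Nat.lt_or_ge i.val j.val with h | h
    · exact conv i j h hadj
    · rcases conv j i (by omega) hadj.symm with h' | h'
      · exact Or.inr h'
      · exact Or.inl h'
  have hne : Nonempty (SimpleGraph.cycleGraph (t + 2) ↪g G) :=
    cycle_embed f hinj hadjf hchordf
  rw [← ht] at hne
  exact (hch n hn4).false hne.some


/-- reachability avoiding a set -/
def RS (G : SimpleGraph V) (S : Set V) (u v : V) : Prop :=
  ∃ p : G.Walk u v, ∀ z ∈ p.support, z ∉ S

lemma RS.notMem_left {S : Set V} (h : RS G S u v) : u ∉ S := by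
  obtain ⟨p, hp⟩ := h; exact hp u p.start_mem_support

lemma RS.refl {S : Set V} (h : u ∉ S) : RS G S u u :=
  ⟨Walk.nil, by simpa using h⟩

lemma RS.symm {S : Set V} (h : RS G S u v) : RS G S v u := by
  obtain ⟨p, hp⟩ := h
  exact ⟨p.reverse, fun z hz => hp z (by rwa [Walk.support_reverse, List.mem_reverse] at hz)⟩

lemma RS.trans {S : Set V} (h : RS G S u v) (h' : RS G S v x) : RS G S u x := by
  obtain ⟨p, hp⟩ := h
  obtain ⟨q, hq⟩ := h'
  refine ⟨p.append q, fun z hz => ?_⟩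
  rw [Walk.mem_support_append_iff] at hz
  exact hz.elim (hp z) (hq z)

lemma RS.adj {S : Set V} (h : G.Adj u v) (hu : u ∉ S) (hv : v ∉ S) : RS G S u v :=
  ⟨Walk.cons h Walk.nil, by
    intro z hz
    simp only [Walk.support_cons, Walk.support_nil, List.mem_cons, List.mem_singleton] at hz
    rcases hz with rfl | rfl | h; exacts [hu, hv, absurd h List.not_mem_nil]⟩

lemma RS.of_mem_support {S : Set V} {p : G.Walk u v} (hp : ∀ z ∈ p.support, z ∉ S)
    {w : V} (hw : w ∈ p.support) : RS G S u w :=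
  ⟨p.takeUntil w hw, fun z hz => hp z (Walk.support_takeUntil_subset _ _ hz)⟩

/-- From a walk hitting `S` only at its final vertex `s`, extract a neighbor of `s`
outside `S` reachable from `x` avoiding `S`. -/
lemma exists_adj_out {S : Set V} {s x : V} (hs : s ∈ S) (hx : x ∉ S) (p : G.Walk x s)
    (hp : ∀ z ∈ p.support, z ∈ S → z = s) (hcount : p.support.count s = 1) :
    ∃ u, G.Adj s u ∧ RS G S x u := by
  have hnn : ¬ p.reverse.Nil := by
    rw [Walk.nil_iff_length_eq, Walk.length_reverse]
    intro h0
    have h1 := p.getVert_length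
    rw [h0, p.getVert_zero] at h1
    exact hx (h1 ▸ hs)
  obtain ⟨w, hadj, q, hq⟩ := Walk.not_nil_iff.mp hnn
  refine ⟨w, hadj, ?_⟩
  have hsup : p.reverse.support = s :: q.support := by rw [hq, Walk.support_cons]
  have hqs : s ∉ q.support := by
    have hcnt : p.reverse.support.count s = 1 := by
      rw [Walk.support_reverse, List.count_reverse]; exact hcount
    rw [hsup, List.count_cons_self] at hcnt
    have : q.support.count s = 0 := by omega
    exact List.count_eq_zero.mp this
  have hqsup : ∀ z ∈ q.support, z ∉ S := by
    intro z hz hzS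
    have hzp : z ∈ p.support := by
      rw [← List.mem_reverse, ← Walk.support_reverse, hsup]
      exact List.mem_cons_of_mem _ hz
    exact hqs ((hp z hzp hzS) ▸ hz)
  exact RS.symm ⟨q, hqsup⟩

lemma RS.notMem_right {S : Set V} (h : RS G S u v) : v ∉ S := by
  obtain ⟨p, hp⟩ := h; exact hp v p.end_mem_support

lemma chordal_of_embedding {W : Type*} {H : SimpleGraph W} (f : H ↪g G) (hch : Chordal G) :
    Chordal H := fun n hn => ⟨fun e => (hch n hn).false (f.comp e)⟩

lemma chordal_induce {s : Set V} (hch : Chordal G) : Chordal (G.induce s) :=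
  chordal_of_embedding (SimpleGraph.Embedding.induce s) hch

lemma simp_of_induce {s : Set V} {u : V} (hu : u ∈ s) (hcl : ∀ z, G.Adj u z → z ∈ s)
    (h : Simp (G.induce s) ⟨u, hu⟩) : Simp G u := by
  intro z w hz hw hne
  have hzs : z ∈ s := hcl z hz
  have hws : w ∈ s := hcl w hw
  exact h ⟨z, hzs⟩ ⟨w, hws⟩ hz hw (fun hh => hne (congrArg Subtype.val hh))

lemma exists_simp_in_comp [Fintype V] {n : ℕ} (hch : Chordal G) {SS A : Set V} {a b : V}
    (IH : ∀ (W : Type u) [Fintype W] (H : SimpleGraph W), Chordal H → Fintype.card W ≤ n →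
        (∀ x y : W, x ≠ y → H.Adj x y) ∨
          ∃ v w, v ≠ w ∧ ¬H.Adj v w ∧ Simp H v ∧ Simp H w)
    (hcard : Fintype.card V ≤ n + 1)
    (hA : A = {z | z ∉ SS ∧ RS G SS a z}) (ha : a ∉ SS)
    (hb : b ∉ A) (hbS : b ∉ SS)
    (hSclique : ∀ x ∈ SS, ∀ y ∈ SS, x ≠ y → G.Adj x y) :
    ∃ u ∈ A, Simp G u := by
  classical
  have haA : a ∈ A := hA ▸ ⟨ha, RS.refl ha⟩
  set s : Set V := A ∪ SS with hs
  have hbs : b ∉ s := fun h => h.elim hb hbS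
  have hclosed : ∀ u ∈ A, ∀ z, G.Adj u z → z ∈ s := by
    intro u hu z hadj
    rw [hA] at hu
    by_cases hzS : z ∈ SS
    · exact Or.inr hzS
    · exact Or.inl (hA ▸ ⟨hzS, hu.2.trans (RS.adj hadj hu.1 hzS)⟩)

  have hcards : Fintype.card ↥s ≤ n := by
    have hlt := Fintype.card_lt_of_injective_of_notMem (Subtype.val : ↥s → V)
      Subtype.coe_injective (b := b) (by rintro ⟨⟨z, hz⟩, rfl⟩; exact hbs hz)
    have hcongr : Fintype.card ↥s = Fintype.card {x // x ∈ s} :=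
      Fintype.card_congr (Equiv.refl _)
    omega
  have hchs : Chordal (G.induce s) := chordal_induce hch
  rcases IH ↥s (G.induce s) hchs hcards with hcomp | ⟨v, w, hvw, hnadj, hv, hw⟩
  · refine ⟨a, haA, ?_⟩
    intro z w hz hw hzw
    have hzs := hclosed a haA z hz
    have hws := hclosed a haA w hw
    exact hcomp ⟨z, hzs⟩ ⟨w, hws⟩ (fun hh => hzw (congrArg Subtype.val hh))
  · have hnotboth : ¬ ((v : V) ∈ SS ∧ (w : V) ∈ SS) := by
      rintro ⟨h1, h2⟩
      exact hnadj (hSclique _ h1 _ h2 (fun h => hvw (Subtype.ext h)))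
    rcases v.2 with hvA | hvS
    · exact ⟨v, hvA, simp_of_induce v.2 (hclosed v hvA) (by simpa using hv)⟩
    · have hwA : (w : V) ∈ A := w.2.resolve_right (fun h => hnotboth ⟨hvS, h⟩)
      exact ⟨w, hwA, simp_of_induce w.2 (hclosed w hwA) (by simpa using hw)⟩

lemma dirac : ∀ (n : ℕ) (W : Type u) [Fintype W] (H : SimpleGraph W), Chordal H →
    Fintype.card W ≤ n →
    (∀ x y : W, x ≠ y → H.Adj x y) ∨
      ∃ v w, v ≠ w ∧ ¬H.Adj v w ∧ Simp H v ∧ Simp H w := by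
  intro n
  induction n with
  | zero =>
    intro W _ H hch hcard
    left
    intro x y _
    exact ((Fintype.card_eq_zero_iff.mp (Nat.le_zero.mp hcard)).false x).elim
  | succ n IH =>
    intro W _ H hch hcard
    by_cases hcomp : ∀ x y : W, x ≠ y → H.Adj x y
    · exact Or.inl hcomp
    right
    push_neg at hcomp
    obtain ⟨a, b, hab, hnadj⟩ := hcomp
    classical
    set seps : Finset (Finset W) :=
      Finset.univ.filter (fun T => a ∉ T ∧ b ∉ T ∧ ¬ RS H (↑T : Set W) a b) with hseps
    have hsepsne : seps.Nonempty := by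
      refine ⟨(Finset.univ.erase a).erase b, ?_⟩
      rw [hseps, Finset.mem_filter]
      refine ⟨Finset.mem_univ _, ?_, ?_, ?_⟩
      · intro h
        exact (Finset.notMem_erase a _) (Finset.mem_of_mem_erase h)
      · exact Finset.notMem_erase b _
      · rintro ⟨p, hp⟩
        have hnn : ¬ p.Nil := by
          rw [SimpleGraph.Walk.nil_iff_length_eq]
          intro h0
          have h1 := p.getVert_length
          rw [h0, p.getVert_zero] at h1
          exact hab h1
        have h1mem := getVert_mem_support p 1
        have hor : ∀ z ∈ p.support, z = a ∨ z = b := by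
          intro z hz
          have := hp z hz
          simp only [Finset.coe_erase, Set.mem_diff, Finset.coe_univ, Set.mem_univ,
            Set.mem_singleton_iff, true_and, not_and, not_not] at this
          by_cases hza : z = a
          · exact Or.inl hza
          · exact Or.inr (this (by simp [hza]))
        have hadj1 := p.adj_getVert_succ (show 0 < p.length by
          rw [SimpleGraph.Walk.nil_iff_length_eq] at hnn; omega)
        rw [p.getVert_zero, zero_add] at hadj1
        rcases hor _ h1mem with h | h
        · rw [h] at hadj1; exact H.irrefl hadj1
        · rw [h] at hadj1; exact hnadj hadj1
    obtain ⟨S, hSmem, hSmin⟩ := seps.exists_min_image Finset.card hsepsne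
    rw [hseps, Finset.mem_filter] at hSmem
    obtain ⟨-, haS, hbS, hnRS⟩ := hSmem
    set SS : Set W := ↑S with hSS
    have haS' : a ∉ SS := by simpa [hSS] using haS
    have hbS' : b ∉ SS := by simpa [hSS] using hbS
    set A : Set W := {z | z ∉ SS ∧ RS H SS a z} with hA
    set B : Set W := {z | z ∉ SS ∧ RS H SS b z} with hB
    have haA : a ∈ A := ⟨haS', RS.refl haS'⟩
    have hbB : b ∈ B := ⟨hbS', RS.refl hbS'⟩
    have hbA : b ∉ A := fun h => hnRS h.2
    have haB : a ∉ B := fun h => hnRS h.2.symm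
    have hABne : ∀ u ∈ A, ∀ w ∈ B, u ≠ w := by
      rintro u hu w hw rfl
      exact hnRS (hu.2.trans hw.2.symm)
    have hABadj : ∀ u ∈ A, ∀ w ∈ B, ¬ H.Adj u w := by
      intro u hu w hw hadj
      exact hnRS ((hu.2.trans (RS.adj hadj hu.1 hw.1)).trans hw.2.symm)
    -- each s in S has neighbors in A and in B
    have hnbr : ∀ (c : W) (C : Set W), C = {z | z ∉ SS ∧ RS H SS c z} → c ∉ SS →
        (¬ RS H SS c b → False) = False → True := fun _ _ _ _ _ => trivial
    have hnbrA : ∀ s ∈ SS, ∃ u, H.Adj s u ∧ u ∈ A := by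
      intro s hsSS
      have hsS : s ∈ S := by simpa [hSS] using hsSS
      have hSer : ¬ (S.erase s ∈ seps) := by
        intro hmem
        have h1 := hSmin _ hmem
        have h2 : (S.erase s).card < S.card := Finset.card_erase_lt_of_mem hsS
        omega
      have hRS' : RS H (↑(S.erase s) : Set W) a b := by
        by_contra h
        refine hSer ?_
        rw [hseps, Finset.mem_filter]
        exact ⟨Finset.mem_univ _,
          fun h' => haS (Finset.mem_of_mem_erase h'),
          fun h' => hbS (Finset.mem_of_mem_erase h'), h⟩
      obtain ⟨p, hp⟩ := hRS'
      have hsmem : s ∈ p.support := by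
        by_contra hns
        refine hnRS ⟨p, fun z hz hzS => ?_⟩
        have hzs : z ≠ s := fun h => hns (h ▸ hz)
        exact hp z hz (by
          simp only [Finset.coe_erase, Set.mem_diff, Set.mem_singleton_iff]
          exact ⟨by simpa [hSS] using hzS, hzs⟩)
      have hp₁ : ∀ z ∈ (p.takeUntil s hsmem).support, z ∈ SS → z = s := by
        intro z hz hzS
        by_contra hzs
        exact hp z (SimpleGraph.Walk.support_takeUntil_subset _ _ hz) (by
          simp only [Finset.coe_erase, Set.mem_diff, Set.mem_singleton_iff]
          exact ⟨by simpa [hSS] using hzS, hzs⟩)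
      obtain ⟨u, hadj, hRSu⟩ := exists_adj_out hsSS haS' (p.takeUntil s hsmem) hp₁
        (p.count_support_takeUntil_eq_one hsmem)
      exact ⟨u, hadj, hRSu.notMem_right, hRSu⟩
    have hnbrB : ∀ s ∈ SS, ∃ u, H.Adj s u ∧ u ∈ B := by
      intro s hsSS
      have hsS : s ∈ S := by simpa [hSS] using hsSS
      have hSer : ¬ (S.erase s ∈ seps) := by
        intro hmem
        have h1 := hSmin _ hmem
        have h2 : (S.erase s).card < S.card := Finset.card_erase_lt_of_mem hsS
        omega
      have hRS' : RS H (↑(S.erase s) : Set W) b a := by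
        by_contra h
        refine hSer ?_
        rw [hseps, Finset.mem_filter]
        refine ⟨Finset.mem_univ _,
          fun h' => haS (Finset.mem_of_mem_erase h'),
          fun h' => hbS (Finset.mem_of_mem_erase h'), fun h' => h h'.symm⟩
      obtain ⟨p, hp⟩ := hRS'
      have hsmem : s ∈ p.support := by
        by_contra hns
        refine hnRS (RS.symm ⟨p, fun z hz hzS => ?_⟩)
        have hzs : z ≠ s := fun h => hns (h ▸ hz)
        exact hp z hz (by
          simp only [Finset.coe_erase, Set.mem_diff, Set.mem_singleton_iff]
          exact ⟨by simpa [hSS] using hzS, hzs⟩)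
      have hp₁ : ∀ z ∈ (p.takeUntil s hsmem).support, z ∈ SS → z = s := by
        intro z hz hzS
        by_contra hzs
        exact hp z (SimpleGraph.Walk.support_takeUntil_subset _ _ hz) (by
          simp only [Finset.coe_erase, Set.mem_diff, Set.mem_singleton_iff]
          exact ⟨by simpa [hSS] using hzS, hzs⟩)
      obtain ⟨u, hadj, hRSu⟩ := exists_adj_out hsSS hbS' (p.takeUntil s hsmem) hp₁
        (p.count_support_takeUntil_eq_one hsmem)
      exact ⟨u, hadj, hRSu.notMem_right, hRSu⟩
    -- S is a clique
    have hSclique : ∀ x ∈ SS, ∀ y ∈ SS, x ≠ y → H.Adj x y := by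
      intro x hx y hy hxy
      by_contra hnadjxy
      obtain ⟨ax, haxadj, haxA⟩ := hnbrA x hx
      obtain ⟨ay, hayadj, hayA⟩ := hnbrA y hy
      obtain ⟨bx, hbxadj, hbxB⟩ := hnbrB x hx
      obtain ⟨by', hbyadj, hbyB⟩ := hnbrB y hy
      have hyA : y ∉ A := fun h => h.1 hy
      have hxB : x ∉ B := fun h => h.1 hx
      -- induced path through A
      obtain ⟨w0, hw0⟩ := (haxA.2.symm.trans hayA.2 : RS H SS ax ay)
      have hw0A : ∀ z ∈ w0.support, z ∈ A := fun z hz =>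
        ⟨hw0 z hz, haxA.2.trans (RS.of_mem_support hw0 hz)⟩
      have hpw : ∃ pw : H.Walk x y, ∀ z ∈ pw.support, z ∈ insert x (insert y A) := by
        refine ⟨SimpleGraph.Walk.cons haxadj
          (w0.append (SimpleGraph.Walk.cons hayadj.symm SimpleGraph.Walk.nil)), ?_⟩
        intro z hz
        rw [SimpleGraph.Walk.support_cons, List.mem_cons] at hz
        rcases hz with rfl | hz
        · exact Set.mem_insert _ _
        rw [SimpleGraph.Walk.mem_support_append_iff] at hz
        rcases hz with hz | hz
        · exact Set.mem_insert_of_mem _ (Set.mem_insert_of_mem _ (hw0A z hz))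
        · simp only [SimpleGraph.Walk.support_cons, SimpleGraph.Walk.support_nil,
            List.mem_cons] at hz
          rcases hz with rfl | rfl | hz
          · exact Set.mem_insert_of_mem _ (Set.mem_insert_of_mem _ hayA)
          · exact Set.mem_insert_of_mem _ (Set.mem_insert _ _)
          · exact absurd hz List.not_mem_nil
      obtain ⟨p, hpsup, hppath, hpc⟩ := exists_induced_walk _ x y hpw
      -- induced path through B
      obtain ⟨w1, hw1⟩ := (hbyB.2.symm.trans hbxB.2 : RS H SS by' bx)
      have hw1B : ∀ z ∈ w1.support, z ∈ B := fun z hz =>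
        ⟨hw1 z hz, hbyB.2.trans (RS.of_mem_support hw1 hz)⟩
      have hqw : ∃ qw : H.Walk y x, ∀ z ∈ qw.support, z ∈ insert x (insert y B) := by
        refine ⟨SimpleGraph.Walk.cons hbyadj
          (w1.append (SimpleGraph.Walk.cons hbxadj.symm SimpleGraph.Walk.nil)), ?_⟩
        intro z hz
        rw [SimpleGraph.Walk.support_cons, List.mem_cons] at hz
        rcases hz with rfl | hz
        · exact Set.mem_insert_of_mem _ (Set.mem_insert _ _)
        rw [SimpleGraph.Walk.mem_support_append_iff] at hz
        rcases hz with hz | hz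
        · exact Set.mem_insert_of_mem _ (Set.mem_insert_of_mem _ (hw1B z hz))
        · simp only [SimpleGraph.Walk.support_cons, SimpleGraph.Walk.support_nil,
            List.mem_cons] at hz
          rcases hz with rfl | rfl | hz
          · exact Set.mem_insert_of_mem _ (Set.mem_insert_of_mem _ hbxB)
          · exact Set.mem_insert _ _
          · exact absurd hz List.not_mem_nil
      obtain ⟨q, hqsup, hqpath, hqc⟩ := exists_induced_walk _ y x hqw
      refine parts_false hch hxy hnadjxy hyA hxB hABne hABadj p hppath ?_ hpc q hqpath ?_ hqc
      · intro z hz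
        rcases hpsup z hz with h | h
        · exact Or.inl h
        · rcases h with h | h
          · exact Or.inr (Or.inl h)
          · exact Or.inr (Or.inr h)
      · intro z hz
        rcases hqsup z hz with h | h
        · exact Or.inl h
        · rcases h with h | h
          · exact Or.inr (Or.inl h)
          · exact Or.inr (Or.inr h)
    obtain ⟨u, huA, hsu⟩ := exists_simp_in_comp hch IH hcard hA haS' hbA hbS' hSclique
    obtain ⟨w, hwB, hsw⟩ := exists_simp_in_comp hch IH hcard hB hbS' haB haS'
      hSclique
    exact ⟨u, w, hABne u huA w hwB, hABadj u huA w hwB, hsu, hsw⟩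

lemma exists_simp [Fintype V] [Nonempty V] (hch : Chordal G) : ∃ v, Simp G v := by
  rcases dirac (Fintype.card V) V G hch le_rfl with h | ⟨v, w, _, _, hv, _⟩
  · exact ⟨Classical.arbitrary V, fun u w h1 h2 hne => h u w hne⟩
  · exact ⟨v, hv⟩

/-- cliques inside a finset -/
def cl (G : SimpleGraph V) (U s : Finset V) : Prop :=
  G.IsClique (s : Set V) ∧ s ⊆ U

/-- maximal cliques inside a finset -/
def mx (G : SimpleGraph V) (U s : Finset V) : Prop :=
  cl G U s ∧ ∀ t, cl G U t → s ⊆ t → s = t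

/-- number of maximal cliques within U -/
noncomputable def MC (G : SimpleGraph V) (U : Finset V) : ℕ :=
  {s : Finset V | mx G U s}.ncard

/-- maximum clique size within U -/
noncomputable def omg (G : SimpleGraph V) (U : Finset V) : ℕ :=
  U.powerset.sup (fun s => if G.IsClique (s : Set V) then s.card else 0)

lemma le_omg {U s : Finset V} (h : cl G U s) : s.card ≤ omg G U := by
  have h2 : s.card ≤ U.powerset.sup
      (fun t : Finset V => if G.IsClique (t : Set V) then t.card else 0) := by
    have := Finset.le_sup (f := fun t : Finset V => if G.IsClique (t : Set V) then t.card else 0)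
      (Finset.mem_powerset.mpr h.2)
    simpa [h.1] using this
  rw [omg]
  exact h2

lemma omg_spec (U : Finset V) : ∃ s, cl G U s ∧ s.card = omg G U := by
  obtain ⟨s, hs, hval⟩ := Finset.exists_mem_eq_sup U.powerset ⟨∅, by simp⟩
    (fun s => if G.IsClique (s : Set V) then s.card else 0)
  by_cases hcl : G.IsClique (s : Set V)
  · exact ⟨s, ⟨hcl, Finset.mem_powerset.mp hs⟩, by rw [omg, hval, if_pos hcl]⟩
  · refine ⟨∅, ⟨by simp, Finset.empty_subset _⟩, ?_⟩
    rw [omg, hval, if_neg hcl]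
    simp
lemma count [Fintype V] (hch : Chordal G) (U : Finset V) :
    MC G U + omg G U ≤ U.card + 1 := by
  induction U using Finset.strongInduction with
  | _ U IH =>
  rcases U.eq_empty_or_nonempty with rfl | hUne
  · have hMC : MC G ∅ = 1 := by
      have hset : {s : Finset V | mx G ∅ s} = {∅} := by
        ext s
        simp only [Set.mem_setOf_eq, Set.mem_singleton_iff]
        constructor
        · intro hs
          exact Finset.subset_empty.mp hs.1.2
        · rintro rfl
          exact ⟨⟨by simp, Finset.empty_subset _⟩,
            fun t ht _ => (Finset.subset_empty.mp ht.2).symm⟩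
      rw [MC, hset, Set.ncard_singleton]
    have homg : omg G ∅ = 0 := by
      apply Nat.le_antisymm _ (Nat.zero_le _)
      apply Finset.sup_le
      intro s hs
      rw [Finset.mem_powerset, Finset.subset_empty] at hs
      subst hs
      simp
    rw [hMC, homg]
    simp
  · -- the simplicial vertex
    haveI : Nonempty ↥(↑U : Set V) := ⟨⟨hUne.choose, hUne.choose_spec⟩⟩
    obtain ⟨⟨v, hvU'⟩, hvsimp⟩ := exists_simp (chordal_induce (s := ↑U) hch)
    have hvU : v ∈ U := hvU'
    have hsimp : ∀ z ∈ U, ∀ w ∈ U, G.Adj v z → G.Adj v w → z ≠ w → G.Adj z w := by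
      intro z hz w hw h1 h2 hne
      exact hvsimp ⟨z, hz⟩ ⟨w, hw⟩ h1 h2 (fun hh => hne (congrArg Subtype.val hh))
    set U' := U.erase v with hU'
    set N : Finset V := U.filter (fun w => G.Adj v w) with hN
    have hvN : v ∉ N := by
      intro h
      rw [hN, Finset.mem_filter] at h
      exact G.irrefl h.2
    have hNU : N ⊆ U := Finset.filter_subset _ _
    have hNU' : N ⊆ U' := by
      intro z hz
      rw [hU', Finset.mem_erase]
      refine ⟨fun h => hvN (h ▸ hz), hNU hz⟩
    have hNmem : ∀ z, z ∈ N ↔ z ∈ U ∧ G.Adj v z := by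
      intro z; rw [hN, Finset.mem_filter]
    have hNcl : G.IsClique (N : Set V) := by
      intro z hz w hw hne
      rw [Finset.mem_coe, hNmem] at hz hw
      exact hsimp z hz.1 w hw.1 hz.2 hw.2 hne
    set Kv : Finset V := insert v N with hKv
    have hKcl : cl G U Kv := by
      constructor
      · rw [hKv, Finset.coe_insert]
        intro z hz w hw hne
        rcases hz with rfl | hz
        · rcases hw with rfl | hw
          · exact absurd rfl hne
          · rw [Finset.mem_coe, hNmem] at hw
            exact hw.2
        · rcases hw with rfl | hw
          · rw [Finset.mem_coe, hNmem] at hz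
            exact hz.2.symm
          · exact hNcl hz hw hne
      · rw [hKv]
        exact Finset.insert_subset hvU hNU
    have hsubKv : ∀ s, cl G U s → v ∈ s → s ⊆ Kv := by
      intro s hs hvs z hz
      by_cases hzv : z = v
      · rw [hKv, hzv]; exact Finset.mem_insert_self _ _
      · rw [hKv, Finset.mem_insert, hNmem]
        exact Or.inr ⟨hs.2 hz, hs.1 (Finset.mem_coe.mpr hvs) (Finset.mem_coe.mpr hz)
          (fun h => hzv h.symm)⟩
    have hKmax : mx G U Kv := by
      refine ⟨hKcl, fun t ht hsub => ?_⟩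
      exact Finset.Subset.antisymm hsub (hsubKv t ht (hsub (Finset.mem_insert_self _ _)))
    have hUcard : U'.card = U.card - 1 := Finset.card_erase_of_mem hvU
    have hU1 : 1 ≤ U.card := Finset.card_pos.mpr hUne
    have IH' := IH U' (Finset.erase_ssubset hvU)
    have hmx_not_v : ∀ s, mx G U s → v ∉ s → mx G U' s := by
      intro s hs hvs
      refine ⟨⟨hs.1.1, fun z hz => Finset.mem_erase.mpr ⟨fun h => hvs (h ▸ hz), hs.1.2 hz⟩⟩,
        fun t ht hsub => hs.2 t ⟨ht.1, ht.2.trans (Finset.erase_subset _ _)⟩ hsub⟩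
    have hmx_v : ∀ s, mx G U s → v ∈ s → s = Kv := by
      intro s hs hvs
      exact hs.2 Kv hKcl (hsubKv s hs.1 hvs)
    by_cases hNmx : mx G U' N
    · -- case (a)
      have hMC : MC G U ≤ MC G U' := by
        refine Set.ncard_le_ncard_of_injOn (fun s => if v ∈ s then N else s) ?_ ?_
          (Set.toFinite _)
        · intro s hs
          by_cases hvs : v ∈ s
          · simpa [hvs] using hNmx
          · simpa [hvs] using hmx_not_v s hs hvs
        · intro s₁ hs₁ s₂ hs₂ heq
          simp only at heq
          by_cases h1 : v ∈ s₁ <;> by_cases h2 : v ∈ s₂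
          · rw [hmx_v s₁ hs₁ h1, hmx_v s₂ hs₂ h2]
          · exfalso
            rw [if_pos h1, if_neg h2] at heq
            have h3 : s₂ = Kv := hs₂.2 Kv hKcl (heq ▸ Finset.subset_insert _ _)
            exact h2 (h3 ▸ Finset.mem_insert_self v N)
          · exfalso
            rw [if_neg h1, if_pos h2] at heq
            have h3 : s₁ = Kv := hs₁.2 Kv hKcl (heq.symm ▸ Finset.subset_insert _ _)
            exact h1 (h3 ▸ Finset.mem_insert_self v N)
          · rwa [if_neg h1, if_neg h2] at heq
      have homg : omg G U ≤ omg G U' + 1 := by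
        obtain ⟨s, hscl, hscard⟩ := omg_spec (G := G) U
        have hcl' : cl G U' (s.erase v) := by
          refine ⟨hscl.1.subset (by simp [Finset.coe_erase, Set.diff_subset]), ?_⟩
          intro z hz
          rw [Finset.mem_erase] at hz
          exact Finset.mem_erase.mpr ⟨hz.1, hscl.2 hz.2⟩
        have h1 := le_omg hcl'
        have h2 : s.card - 1 ≤ (s.erase v).card := by
          by_cases h : v ∈ s
          · exact (Finset.card_erase_of_mem h).ge
          · rw [Finset.erase_eq_of_notMem h]
            omega
        omega
      omega
    · -- case (b)
      have hMC : MC G U ≤ MC G U' + 1 := by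
        have hsub : {s : Finset V | mx G U s} ⊆ insert Kv {s : Finset V | mx G U' s} := by
          intro s hs
          by_cases hvs : v ∈ s
          · exact Set.mem_insert_iff.mpr (Or.inl (hmx_v s hs hvs))
          · exact Set.mem_insert_iff.mpr (Or.inr (hmx_not_v s hs hvs))
        calc MC G U ≤ (insert Kv {s : Finset V | mx G U' s}).ncard :=
              Set.ncard_le_ncard hsub (Set.toFinite _)
          _ ≤ MC G U' + 1 := Set.ncard_insert_le _ _
      have homg : omg G U ≤ omg G U' := by
        obtain ⟨s, hscl, hscard⟩ := omg_spec (G := G) U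
        rw [← hscard]
        by_cases hvs : v ∈ s
        · -- s = Kv
          have hsKv : s ⊆ Kv := hsubKv s hscl hvs
          have hcards : Kv.card ≤ s.card := hscard ▸ le_omg hKcl
          have hseq : s = Kv := Finset.eq_of_subset_of_card_le hsKv hcards
          -- N is not maximal in U'
          have hclN : cl G U' N := ⟨hNcl, hNU'⟩
          have hex : ∃ t, cl G U' t ∧ N ⊆ t ∧ N ≠ t := by
            by_contra hcon
            push_neg at hcon
            exact hNmx ⟨hclN, fun t ht hsub => hcon t ht hsub⟩
          obtain ⟨t, htcl, htsub, htne⟩ := hex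
          obtain ⟨w, hwt, hwN⟩ := Finset.exists_of_ssubset (lt_of_le_of_ne htsub htne)
          have hwin : cl G U' (insert w N) := by
            constructor
            · rw [Finset.coe_insert]
              intro z hz z' hz' hne
              rcases hz with rfl | hz
              · rcases hz' with rfl | hz'
                · exact absurd rfl hne
                · exact htcl.1 (Finset.mem_coe.mpr hwt) (Finset.mem_coe.mpr (htsub hz')) hne
              · rcases hz' with rfl | hz'
                · exact (htcl.1 (Finset.mem_coe.mpr hwt) (Finset.mem_coe.mpr (htsub hz))
                    (fun h => hne h.symm)).symm
                · exact hNcl hz hz' hne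
            · exact Finset.insert_subset (htcl.2 hwt) hNU'
          have h1 := le_omg hwin
          have h2 : (insert w N).card = N.card + 1 := Finset.card_insert_of_notMem hwN
          have h3 : Kv.card = N.card + 1 := Finset.card_insert_of_notMem hvN
          have h4 : s.card = Kv.card := by rw [hseq]
          omega
        · have : cl G U' s := ⟨hscl.1, fun z hz =>
            Finset.mem_erase.mpr ⟨fun h => hvs (h ▸ hz), hscl.2 hz⟩⟩
          exact le_omg this
      omega



end ChordalAux

open ChordalAux in
/-- In a finite chordal graph on n vertices with maximum clique size ω and
set of maximal cliques 𝒞, one has n − |𝒞| ≥ ω − 1. -/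
theorem stmt4 {V : Type*} [Fintype V] (G : SimpleGraph V) (hch : Chordal G)
    (ω : ℕ) (hω : IsGreatest {k : ℕ | ∃ s : Finset V, G.IsNClique k s} ω) :
    ω - 1 ≤ Fintype.card V -
      {C : Set V | G.IsClique C ∧ ∀ C' : Set V, G.IsClique C' → C ⊆ C' → C = C'}.ncard := by
  classical
  have hkey := count hch (Finset.univ : Finset V)
  set Cset := {C : Set V | G.IsClique C ∧ ∀ C' : Set V, G.IsClique C' → C ⊆ C' → C = C'}
    with hCset
  have himg : Cset = (fun s : Finset V => (s : Set V)) '' {s : Finset V | mx G Finset.univ s} := by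
    ext C
    simp only [hCset, Set.mem_image, Set.mem_setOf_eq]
    constructor
    · rintro ⟨hcl, hmax⟩
      refine ⟨(Set.toFinite C).toFinset, ⟨⟨?_, Finset.subset_univ _⟩, ?_⟩,
        (Set.toFinite C).coe_toFinset⟩
      · rw [(Set.toFinite C).coe_toFinset]
        exact hcl
      · intro t ht hsub
        have hCt : C = ↑t := hmax ↑t ht.1 (by
          rw [← (Set.toFinite C).coe_toFinset]
          exact_mod_cast hsub)
        apply Finset.coe_injective
        rw [(Set.toFinite C).coe_toFinset, hCt]
    · rintro ⟨s, ⟨⟨hcl, -⟩, hmax⟩, rfl⟩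
      refine ⟨hcl, ?_⟩
      intro C' hC' hsub
      have hfin := Set.toFinite C'
      have h1 : s ⊆ hfin.toFinset := by
        intro z hz
        rw [Set.Finite.mem_toFinset]
        exact hsub hz
      have h2 := hmax hfin.toFinset ⟨by rwa [hfin.coe_toFinset], Finset.subset_univ _⟩ h1
      rw [h2, hfin.coe_toFinset]
  have hncard : Cset.ncard = MC G Finset.univ := by
    rw [himg, Set.ncard_image_of_injective _ Finset.coe_injective]
    rfl
  have homega : ω = omg G Finset.univ := by
    apply le_antisymm
    · obtain ⟨s, hs⟩ := hω.1
      exact hs.2 ▸ le_omg ⟨hs.1, Finset.subset_univ _⟩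
    · obtain ⟨s, hscl, hscard⟩ := omg_spec (G := G) Finset.univ
      exact hω.2 ⟨s, hscl.1, hscard⟩
  have hcard : (Finset.univ : Finset V).card = Fintype.card V := Finset.card_univ
  omega
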